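/- Let f : ℝ → ℝ be continuous with compact support, let p₁, p₂, q₁, q₂ ∈ ℝ and set u = (p₁ − p₂) − (q₁ − q₂). For square-integrable g : ℝ → ℝ define L₁d(g) = ∑_{i∈{1,2}} ∫ (g(x) − f(x − p_i + q_i))² dx. Then g⋆(x) = (f(x − p₁ + q₁) + f(x − p₂ + q₂))/2 minimizes L₁d over all measurable g with g² integrable, and the minimum value is L₁d(g⋆) = (1/2) ∫ (f(x) − f(x + u))² dx; in particular the optimal value depends on p₁, p₂, q₁, q₂ only through the shift u. -/
import Mathlib


open MeasureTheory

private lemma shift_cs (f : ℝ → ℝ) (hsupp : HasCompactSupport f) (a b : ℝ) :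
    HasCompactSupport (fun x => f (x - a + b)) := by
  have h : (fun x => f (x - a + b)) = fun x => f (x + (-a + b)) := by
    funext x; congr 1; ring
  rw [h]
  exact hsupp.comp_homeomorph (Homeomorph.addRight (-a + b))

theorem stmt_1 (f : ℝ → ℝ) (hf : Continuous f) (hsupp : HasCompactSupport f)
    (p₁ p₂ q₁ q₂ u : ℝ) (hu : u = (p₁ - p₂) - (q₁ - q₂)) :
    (∀ g : ℝ → ℝ, Measurable g → Integrable (fun x => (g x) ^ 2) →
      (∫ x, ((f (x - p₁ + q₁) + f (x - p₂ + q₂)) / 2 - f (x - p₁ + q₁)) ^ 2) +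
        (∫ x, ((f (x - p₁ + q₁) + f (x - p₂ + q₂)) / 2 - f (x - p₂ + q₂)) ^ 2)
        ≤ (∫ x, (g x - f (x - p₁ + q₁)) ^ 2) + (∫ x, (g x - f (x - p₂ + q₂)) ^ 2)) ∧
    (∫ x, ((f (x - p₁ + q₁) + f (x - p₂ + q₂)) / 2 - f (x - p₁ + q₁)) ^ 2) +
      (∫ x, ((f (x - p₁ + q₁) + f (x - p₂ + q₂)) / 2 - f (x - p₂ + q₂)) ^ 2)
      = (1 / 2) * ∫ x, (f x - f (x + u)) ^ 2 := by
  set f₁ : ℝ → ℝ := fun x => f (x - p₁ + q₁) with hf₁def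
  set f₂ : ℝ → ℝ := fun x => f (x - p₂ + q₂) with hf₂def
  have hcf₁ : Continuous f₁ := hf.comp (by continuity)
  have hcf₂ : Continuous f₂ := hf.comp (by continuity)
  have hcs₁ : HasCompactSupport f₁ := shift_cs f hsupp p₁ q₁
  have hcs₂ : HasCompactSupport f₂ := shift_cs f hsupp p₂ q₂
  have hA : Integrable (fun x => ((f₁ x + f₂ x) / 2 - f₁ x) ^ 2) := by
    apply Continuous.integrable_of_hasCompactSupport (by fun_prop)
    exact hcs₁.comp₂_left (m := fun a b => ((a + b) / 2 - a) ^ 2) hcs₂ (by simp)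
  have hB : Integrable (fun x => ((f₁ x + f₂ x) / 2 - f₂ x) ^ 2) := by
    apply Continuous.integrable_of_hasCompactSupport (by fun_prop)
    exact hcs₁.comp₂_left (m := fun a b => ((a + b) / 2 - b) ^ 2) hcs₂ (by simp)
  have hF₁sq : Integrable (fun x => (f₁ x) ^ 2) := by
    apply Continuous.integrable_of_hasCompactSupport (by fun_prop)
    exact hcs₁.comp_left (g := (· ^ 2)) (by simp)
  have hF₂sq : Integrable (fun x => (f₂ x) ^ 2) := by
    apply Continuous.integrable_of_hasCompactSupport (by fun_prop)
    exact hcs₂.comp_left (g := (· ^ 2)) (by simp)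
  constructor
  · intro g hg hgsq
    have hC : Integrable (fun x => (g x - f₁ x) ^ 2) := by
      apply Integrable.mono' (((hgsq.const_mul 2).add (hF₁sq.const_mul 2)))
      · exact ((hg.sub hcf₁.measurable).pow_const 2).aestronglyMeasurable
      · filter_upwards with x
        simp only [Pi.add_apply]
        rw [Real.norm_eq_abs, abs_of_nonneg (by positivity)]
        nlinarith [sq_nonneg (g x + f₁ x)]
    have hE : Integrable (fun x => (g x - f₂ x) ^ 2) := by
      apply Integrable.mono' (((hgsq.const_mul 2).add (hF₂sq.const_mul 2)))
      · exact ((hg.sub hcf₂.measurable).pow_const 2).aestronglyMeasurable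
      · filter_upwards with x
        simp only [Pi.add_apply]
        rw [Real.norm_eq_abs, abs_of_nonneg (by positivity)]
        nlinarith [sq_nonneg (g x + f₂ x)]
    rw [← integral_add hA hB, ← integral_add hC hE]
    apply integral_mono (hA.add hB) (hC.add hE)
    intro x
    simp only [Pi.add_apply]
    nlinarith [sq_nonneg (2 * g x - f₁ x - f₂ x)]
  · have h1 : (fun x => ((f₁ x + f₂ x) / 2 - f₁ x) ^ 2)
        = fun x => (1 / 4) * (f₁ x - f₂ x) ^ 2 := by funext x; ring
    have h2 : (fun x => ((f₁ x + f₂ x) / 2 - f₂ x) ^ 2)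
        = fun x => (1 / 4) * (f₁ x - f₂ x) ^ 2 := by funext x; ring
    have htrans : (∫ x, (f₁ x - f₂ x) ^ 2) = ∫ x, (f x - f (x + u)) ^ 2 := by
      have := integral_add_right_eq_self (μ := volume)
        (fun y => (f y - f (y + u)) ^ 2) (-p₁ + q₁)
      rw [← this]
      congr 1
      funext x
      have h3 : x + (-p₁ + q₁) + u = x - p₂ + q₂ := by rw [hu]; ring
      have h4 : x + (-p₁ + q₁) = x - p₁ + q₁ := by ring
      rw [h3, h4]
    rw [h1, h2, integral_const_mul, htrans]
    ring
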